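/- arXiv:1709.05398 — 2 statements merged into one kernel-verified Lean document; each statement's English description precedes it below -/
import Mathlib

section
/- For a differentiable curve of rotations R(t) ∈ SO(3) and a constant symmetric matrix K, the time derivative of φ_R(t) = ½ tr(K(I₃ - R(t))) along R satisfies φ̇_R = (as(K R)ᵛ)ᵀ ω, where ω̃ = Rᵀ Ṙ. -/
open Matrix

/-- The hat map sending `ω ∈ ℝ³` to the skew-symmetric matrix `ω̃` with `ω̃ v = ω × v`. -/
def hat (ω : Fin 3 → ℝ) : Matrix (Fin 3) (Fin 3) ℝ :=
  !![0, -ω 2, ω 1; ω 2, 0, -ω 0; -ω 1, ω 0, 0]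

/-- The vee map: inverse of the hat map on skew-symmetric matrices. -/
def vee (S : Matrix (Fin 3) (Fin 3) ℝ) : Fin 3 → ℝ :=
  ![S 2 1, S 0 2, S 1 0]

/-- The antisymmetric part `as(A) = ½(A - Aᵀ)`. -/
noncomputable def skewPart (A : Matrix (Fin 3) (Fin 3) ℝ) : Matrix (Fin 3) (Fin 3) ℝ :=
  (1 / 2 : ℝ) • (A - Aᵀ)

/-- Along a rotation curve `R(t)` with body angular velocity `ω̃ = Rᵀ Ṙ`, the function
`φ_R(t) = ½ tr(K(I - R(t)))` (for constant symmetric `K`) satisfies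
`φ̇_R = (as(K R)ᵛ)ᵀ ω`. -/
theorem deriv_error_function (K : Matrix (Fin 3) (Fin 3) ℝ) (hK : Kᵀ = K)
    (R R' : ℝ → Matrix (Fin 3) (Fin 3) ℝ) (ω : Fin 3 → ℝ) (t : ℝ)
    (hSO : ∀ s, (R s)ᵀ * R s = 1 ∧ (R s).det = 1)
    (hR' : ∀ s i j, HasDerivAt (fun τ => R τ i j) (R' s i j) s)
    (hω : hat ω = (R t)ᵀ * R' t) :
    HasDerivAt (fun s => (1 / 2 : ℝ) * (K * (1 - R s)).trace)
      (vee (skewPart (K * R t)) ⬝ᵥ ω) t := by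
  have hRRT : R t * (R t)ᵀ = 1 := by
    rw [mul_eq_one_comm]; exact (hSO t).1
  have hR'eq : R' t = R t * hat ω := by
    rw [hω, ← mul_assoc, hRRT, one_mul]
  have hsum : HasDerivAt (fun s => ∑ i, ∑ j, K i j * R s j i)
      (∑ i, ∑ j, K i j * R' t j i) t := by
    apply HasDerivAt.fun_sum; intro i _
    apply HasDerivAt.fun_sum; intro j _
    exact (hR' t j i).const_mul _
  have h := ((hasDerivAt_const t K.trace).sub hsum).const_mul (1/2 : ℝ)
  convert h using 1
  · rfl
  · rfl
  · funext s
    simp [Matrix.trace, Matrix.mul_apply, Matrix.sub_apply, Matrix.one_apply,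
      Fin.sum_univ_three, Matrix.diag]
    ring
  · rw [hR'eq]
    simp [vee, skewPart, hat, Matrix.trace, Matrix.mul_apply, dotProduct,
      Fin.sum_univ_three, Matrix.transpose_apply, Matrix.diag, Matrix.sub_apply,
      Matrix.smul_apply]
    ring
end

section
/- For the tilted-hexarotor directions u_i = R_z((i-1)π/3) R_x((-1)^{i+1}α) e₃, i = 1,…,6, the third components of u₁ × u₂ and all other adjacent cross products are nonzero whenever sin α ≠ 0 and cos α ≠ 0, and the set {u₁,…,u₆} spans ℝ³ for α ∈ (0, π/2). -/
open Matrix Real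

/-- Rotation about the x-axis. -/
noncomputable def Rx (θ : ℝ) : Matrix (Fin 3) (Fin 3) ℝ :=
  !![1, 0, 0; 0, Real.cos θ, -Real.sin θ; 0, Real.sin θ, Real.cos θ]

/-- Rotation about the z-axis. -/
noncomputable def Rz (θ : ℝ) : Matrix (Fin 3) (Fin 3) ℝ :=
  !![Real.cos θ, -Real.sin θ, 0; Real.sin θ, Real.cos θ, 0; 0, 0, 1]

lemma RzRx_e3 (θ ψ : ℝ) : (Rz θ * Rx ψ).mulVec ![0,0,1] =
    ![Real.sin θ * Real.sin ψ, -(Real.cos θ * Real.sin ψ), Real.cos ψ] := by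
  funext j
  fin_cases j <;>
    simp [Rz, Rx, Matrix.mulVec, Matrix.mul_apply, Fin.sum_univ_succ, dotProduct]

/-- For the tilted-hexarotor directions `u_i = R_z((i-1)π/3) R_x((-1)^{i+1}α) e₃`,
the third components of all adjacent cross products `u_i × u_{i+1}` are nonzero
whenever `sin α ≠ 0` and `cos α ≠ 0`, and `{u₁,…,u₆}` spans `ℝ³` for `α ∈ (0, π/2)`. -/
theorem adjacent_cross_products_and_span (α : ℝ) (u : Fin 6 → Fin 3 → ℝ)
    (hu : ∀ i : Fin 6, u i =
      (Rz ((i : ℕ) * Real.pi / 3) * Rx ((-1 : ℝ) ^ (i : ℕ) * α)).mulVec ![0, 0, 1]) :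
    (Real.sin α ≠ 0 → Real.cos α ≠ 0 →
      ∀ i : Fin 6, crossProduct (u i) (u (i + 1)) 2 ≠ 0) ∧
    (α ∈ Set.Ioo 0 (Real.pi / 2) →
      Submodule.span ℝ (Set.range u) = (⊤ : Submodule ℝ (Fin 3 → ℝ))) := by
  set s := Real.sin α with hs'
  set c := Real.cos α with hc'
  have sqrt3_pos : (0:ℝ) < Real.sqrt 3 := Real.sqrt_pos.2 (by norm_num)
  -- explicit values
  have hu0 : u 0 = ![0, -s, c] := by
    rw [hu 0, RzRx_e3]
    norm_num [← hs', ← hc']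
  have hu1 : u 1 = ![-(Real.sqrt 3/2 * s), s/2, c] := by
    rw [hu 1, RzRx_e3, show ((1:Fin 6):ℕ) = 1 from rfl]
    push_cast
    funext j; fin_cases j <;>
      norm_num [Real.sin_neg, Real.cos_neg, Real.sin_pi_div_three, Real.cos_pi_div_three] <;>
      ring
  have e2 : ((2:ℕ):ℝ) * Real.pi / 3 = Real.pi - Real.pi/3 := by push_cast; ring
  have e3 : ((3:ℕ):ℝ) * Real.pi / 3 = Real.pi := by push_cast; ring
  have e4 : ((4:ℕ):ℝ) * Real.pi / 3 = 2*Real.pi - (Real.pi - Real.pi/3) := by push_cast; ring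
  have e5 : ((5:ℕ):ℝ) * Real.pi / 3 = 2*Real.pi - Real.pi/3 := by push_cast; ring
  have hu2 : u 2 = ![Real.sqrt 3/2 * s, s/2, c] := by
    rw [hu 2, RzRx_e3, show ((2:Fin 6):ℕ) = 2 from rfl, e2,
      Real.sin_pi_sub, Real.cos_pi_sub, Real.sin_pi_div_three, Real.cos_pi_div_three]
    funext j; fin_cases j <;> norm_num <;> ring
  have hu3 : u 3 = ![0, -s, c] := by
    rw [hu 3, RzRx_e3, show ((3:Fin 6):ℕ) = 3 from rfl, e3]
    funext j; fin_cases j <;> norm_num [Real.sin_neg, Real.cos_neg, ← hs', ← hc']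
  have hu4 : u 4 = ![-(Real.sqrt 3/2 * s), s/2, c] := by
    rw [hu 4, RzRx_e3, show ((4:Fin 6):ℕ) = 4 from rfl, e4, Real.sin_two_pi_sub,
      Real.cos_two_pi_sub, Real.sin_pi_sub, Real.cos_pi_sub, Real.sin_pi_div_three,
      Real.cos_pi_div_three]
    funext j; fin_cases j <;> norm_num <;> ring
  have hu5 : u 5 = ![Real.sqrt 3/2 * s, s/2, c] := by
    rw [hu 5, RzRx_e3, show ((5:Fin 6):ℕ) = 5 from rfl, e5, Real.sin_two_pi_sub,
      Real.cos_two_pi_sub, Real.sin_pi_div_three, Real.cos_pi_div_three]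
    funext j; fin_cases j <;> norm_num [Real.sin_neg, Real.cos_neg] <;> ring
  constructor
  · intro hs _ i
    have key : ∀ x : ℝ, x = -(Real.sqrt 3/2 * s * s) → x ≠ 0 := by
      intro x hx h0
      rw [h0] at hx
      exact mul_ne_zero (mul_ne_zero (by positivity : Real.sqrt 3/2 ≠ 0) hs) hs (by linarith)
    fin_cases i
    · show crossProduct (u 0) (u 1) 2 ≠ 0
      apply key; rw [hu0, hu1]; simp [crossProduct]; try ring
    · show crossProduct (u 1) (u 2) 2 ≠ 0
      apply key; rw [hu1, hu2]; simp [crossProduct]; try ring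
    · show crossProduct (u 2) (u 3) 2 ≠ 0
      apply key; rw [hu2, hu3]; simp [crossProduct]; try ring
    · show crossProduct (u 3) (u 4) 2 ≠ 0
      apply key; rw [hu3, hu4]; simp [crossProduct]; try ring
    · show crossProduct (u 4) (u 5) 2 ≠ 0
      apply key; rw [hu4, hu5]; simp [crossProduct]; try ring
    · show crossProduct (u 5) (u 0) 2 ≠ 0
      apply key; rw [hu5, hu0]; simp [crossProduct]; try ring
  · rintro ⟨ha1, ha2⟩
    have hs : 0 < s := Real.sin_pos_of_pos_of_lt_pi ha1 (by linarith [Real.pi_gt_three])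
    have hc : 0 < c := Real.cos_pos_of_mem_Ioo ⟨by linarith [Real.pi_pos], ha2⟩
    set S := Submodule.span ℝ (Set.range u) with hS
    have m0 : u 0 ∈ S := Submodule.subset_span ⟨0, rfl⟩
    have m1 : u 1 ∈ S := Submodule.subset_span ⟨1, rfl⟩
    have m2 : u 2 ∈ S := Submodule.subset_span ⟨2, rfl⟩
    have mz : (![0,0,1] : Fin 3 → ℝ) ∈ S := by
      have h : (![0,0,1] : Fin 3 → ℝ) = (3*c)⁻¹ • (u 0 + u 1 + u 2) := by
        funext j; fin_cases j <;> simp [hu0, hu1, hu2] <;>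
          (try field_simp) <;> (try ring) <;> simp
      rw [h]
      exact Submodule.smul_mem S _ (Submodule.add_mem S (Submodule.add_mem S m0 m1) m2)
    have mx : (![1,0,0] : Fin 3 → ℝ) ∈ S := by
      have h : (![1,0,0] : Fin 3 → ℝ) = (Real.sqrt 3 * s)⁻¹ • (u 2 - u 1) := by
        funext j; fin_cases j <;> simp [hu1, hu2] <;>
          (try field_simp) <;> (try ring) <;> simp
      rw [h]
      exact Submodule.smul_mem S _ (Submodule.sub_mem S m2 m1)
    have my : (![0,1,0] : Fin 3 → ℝ) ∈ S := by
      have h : (![0,1,0] : Fin 3 → ℝ) = s⁻¹ • (u 1 + u 2 - (2*c) • ![0,0,1]) := by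
        funext j; fin_cases j <;> simp [hu1, hu2] <;>
          (try field_simp) <;> (try ring) <;> simp
      rw [h]
      exact Submodule.smul_mem S _ (Submodule.sub_mem S (Submodule.add_mem S m1 m2)
        (Submodule.smul_mem S _ mz))
    rw [eq_top_iff]
    intro v _
    have hv : v = v 0 • ![1,0,0] + v 1 • ![0,1,0] + v 2 • ![0,0,1] := by
      funext j; fin_cases j <;> simp
    rw [hv]
    exact Submodule.add_mem S (Submodule.add_mem S (Submodule.smul_mem S _ mx)
      (Submodule.smul_mem S _ my)) (Submodule.smul_mem S _ mz)
end
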